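/- arXiv:1610.04807 — 3 statements merged into one kernel-verified Lean document; each statement's English description precedes it below -/
import Mathlib

section
/- For every a > 1 there exists C > 0 so that for every n there is a word L of length ⌊an⌋ over an alphabet of n letters such that every block B of L satisfies s₂(B)/s(B) ≤ C/log n. -/
namespace S15

/-! ### Numeric helpers -/

lemma cube_le_pow : ∀ q : ℕ, 50 ≤ q → 27*q*q*q ≤ 2^q := by
  intro q hq
  induction q, hq using Nat.le_induction with
  | base => norm_num
  | succ p hp ih =>
    have h2 : 27*(p+1)*(p+1)*(p+1) ≤ 2*(27*p*p*p) := by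
      nlinarith [Nat.mul_le_mul_right (p*p) hp, Nat.mul_le_mul_right p hp, hp]
    calc 27*(p+1)*(p+1)*(p+1) ≤ 2*(27*p*p*p) := h2
      _ ≤ 2*2^p := by omega
      _ = 2^(p+1) := by ring

lemma add_div_le (a b u : ℕ) (hu : 0 < u) : (a+b)/u ≤ a/u + b/u + 1 := by
  have ha := Nat.div_add_mod a u
  have hb := Nat.div_add_mod b u
  have ha2 : a % u < u := Nat.mod_lt _ hu
  have hb2 : b % u < u := Nat.mod_lt _ hu
  have h : a + b < (a/u + b/u + 2) * u := by nlinarith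
  have := (Nat.div_lt_iff_lt_mul hu).mpr h
  omega

lemma sum_two_pow (J : ℕ) : (∑ j ∈ Finset.range J, 2^(j+1)) = 2^(J+1) - 2 := by
  induction J with
  | zero => simp
  | succ p ih =>
    rw [Finset.sum_range_succ, ih]
    have h1 : (2:ℕ) ≤ 2^(p+1) := by
      have := Nat.pow_le_pow_right (by norm_num : 1 ≤ 2) (Nat.succ_le_succ (Nat.zero_le p))
      simpa using this
    have h2 : (2:ℕ)^(p+1+1) = 2^(p+1) + 2^(p+1) := by ring
    omega

/-! ### List/Finset bridges -/

lemma toFinset_range' (s l : ℕ) : (List.range' s l).toFinset = Finset.Ico s (s + l) := by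
  ext p
  simp only [List.mem_toFinset, List.mem_range', Finset.mem_Ico]
  constructor
  · rintro ⟨i, hi, rfl⟩; omega
  · intro hp; exact ⟨p - s, by omega, by omega⟩

lemma take_drop_range (N i j : ℕ) :
    ((List.range N).take j).drop i
      = List.range' (min i (min j N)) (min j N - min i (min j N)) := by
  apply List.ext_getElem
  · simp; omega
  · intro k h1 h2
    simp only [List.getElem_drop, List.getElem_take, List.getElem_range, List.getElem_range']
    have : k < min j N - min i (min j N) := by simpa using h2
    omega

lemma toFinset_block {α : Type*} [DecidableEq α] (f : ℕ → α) (s l : ℕ) :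
    ((List.range' s l).map f).toFinset = (Finset.Ico s (s+l)).image f := by
  ext v
  simp only [List.mem_toFinset, List.mem_map, Finset.mem_image, List.mem_range', Finset.mem_Ico]
  constructor
  · rintro ⟨p, ⟨i, hi, rfl⟩, rfl⟩; exact ⟨s+1*i, ⟨by omega, by omega⟩, rfl⟩
  · rintro ⟨p, hp, rfl⟩; exact ⟨p, ⟨p - s, by omega, by omega⟩, rfl⟩

lemma count_block {α : Type*} [DecidableEq α] (f : ℕ → α) (s l : ℕ) (v : α) :
    ((List.range' s l).map f).count v
      = ((Finset.Ico s (s+l)).filter (fun p => f p = v)).card := by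
  rw [List.count_eq_countP, List.countP_map, List.countP_eq_length_filter]
  have hnd : (List.range' s l).Nodup := List.nodup_range'
  have hnd2 := hnd.filter ((fun x => x == v) ∘ f)
  rw [← List.toFinset_card_of_nodup hnd2, List.toFinset_filter, toFinset_range']
  congr 1
  apply Finset.filter_congr
  intro p _
  simp [Function.comp]

lemma ratio_le_one {α : Type*} [DecidableEq α] (L : List α) (P : α → Prop) [DecidablePred P] :
    (((L.toFinset.filter P).card : ℝ) / L.toFinset.card) ≤ 1 := by
  rcases eq_or_ne L.toFinset.card 0 with h | h
  · rw [h]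
    have : (L.toFinset.filter P).card = 0 := by
      have := Finset.card_filter_le L.toFinset P
      omega
    simp [this]
  · apply div_le_one_of_le₀
    · exact_mod_cast Finset.card_filter_le L.toFinset P
    · positivity


/-! ### The construction -/

def Kf (n : ℕ) : ℕ := Nat.log 2 n
def mf (n : ℕ) : ℕ := Kf n / 2
def ef (A : ℕ) : ℕ := 4 * A
def uf (n A : ℕ) : ℕ := Kf n + mf n * ef A
def Mf (n A N : ℕ) : ℕ := N / uf n A
def ORf (n A N : ℕ) : ℕ := Mf n A N * Kf n + uf n A

/-- the letter (as a natural number) at position `p` -/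
def lett (n A N p : ℕ) : ℕ :=
  if Mf n A N * uf n A ≤ p then Mf n A N * Kf n + (p - Mf n A N * uf n A)
  else if p % uf n A < Kf n then (p / uf n A) * Kf n + p % uf n A
  else ORf n A N + (p % uf n A - Kf n) * 2 ^ (mf n + 1)
        + (p / uf n A) % 2 ^ ((p % uf n A - Kf n) / ef A + 1)

structure Ctx (n A N : ℕ) : Prop where
  hA : 2 ≤ A
  hK : 1000 ≤ Kf n
  hKA : 100 * A * A ≤ Kf n
  hNA : N ≤ A * n

namespace Ctx

variable {n A N : ℕ}

lemma hAK (h : Ctx n A N) : 2 * A ≤ Kf n := by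
  nlinarith [h.hKA, h.hA]

lemma hAleK (h : Ctx n A N) : A ≤ Kf n := by
  nlinarith [h.hKA, h.hA]

lemma u_ge (h : Ctx n A N) : 2 * (A * Kf n) ≤ uf n A := by
  have h2 : Kf n ≤ 2 * mf n + 1 := by unfold mf; omega
  have hAK := h.hAK
  calc 2 * (A * Kf n) ≤ 2 * A * (2 * mf n + 1) := by
        calc 2 * (A * Kf n) = 2 * A * Kf n := by ring
          _ ≤ 2 * A * (2 * mf n + 1) := Nat.mul_le_mul_left _ h2
    _ = mf n * (4 * A) + 2 * A := by ring
    _ ≤ mf n * (4 * A) + Kf n := by omega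
    _ = uf n A := by unfold uf ef; ring

lemma u_le (h : Ctx n A N) : uf n A ≤ 3 * (A * Kf n) := by
  have h2 : mf n * 4 ≤ 2 * Kf n := by unfold mf; omega
  have h3 : mf n * (4 * A) ≤ 2 * Kf n * A :=
    calc mf n * (4 * A) = (mf n * 4) * A := by ring
      _ ≤ (2 * Kf n) * A := Nat.mul_le_mul_right _ h2
      _ = 2 * Kf n * A := rfl
  have h4 : Kf n ≤ A * Kf n := Nat.le_mul_of_pos_left _ (by have := h.hA; omega)
  calc uf n A = Kf n + mf n * (4 * A) := rfl
    _ ≤ Kf n + 2 * Kf n * A := Nat.add_le_add_left h3 _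
    _ ≤ A * Kf n + 2 * Kf n * A := Nat.add_le_add_right h4 _
    _ = 3 * (A * Kf n) := by ring

lemma u_pos (h : Ctx n A N) : 0 < uf n A := by
  have h1 := h.u_ge
  have h2 := h.hK
  have h3 := h.hA
  nlinarith

lemma n_pos (h : Ctx n A N) : 2 ≤ n := by
  rcases Nat.lt_or_ge n 2 with hc | hc
  · exfalso
    have hK := h.hK
    have hz : Kf n = 0 := by
      interval_cases n
      · simp [Kf]
      · simp [Kf]
    omega
  · exact hc

lemma pow_le (h : Ctx n A N) : 2 ^ Kf n ≤ n := by
  have h2 : n ≠ 0 := by have := h.n_pos; omega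
  exact Nat.pow_log_le_self 2 h2

lemma core_pow (h : Ctx n A N) : 22 * (A * Kf n) ≤ 2 ^ mf n := by
  have hq : mf n = Kf n / 2 := rfl
  have hq50 : 50 ≤ mf n := by have := h.hK; omega
  have hcube := cube_le_pow (mf n) hq50
  have hA : A ≤ Kf n := h.hAleK
  have hK22 : 22 ≤ Kf n := by have := h.hK; omega
  have hK3q : Kf n ≤ 3 * mf n := by omega
  calc 22 * (A * Kf n) ≤ Kf n * Kf n * Kf n := by nlinarith
    _ ≤ (3 * mf n) * (3 * mf n) * (3 * mf n) :=
        Nat.mul_le_mul (Nat.mul_le_mul hK3q hK3q) hK3q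
    _ = 27 * mf n * mf n * mf n := by ring
    _ ≤ 2 ^ mf n := hcube

lemma alpha (h : Ctx n A N) : ORf n A N + mf n * ef A * 2 ^ (mf n + 1) ≤ n := by
  -- part 1 : 2 * (M * K) ≤ n
  have hMu : Mf n A N * uf n A ≤ N := Nat.div_mul_le_self N (uf n A)
  have h1 : A * (2 * (Mf n A N * Kf n)) ≤ A * n := by
    calc A * (2 * (Mf n A N * Kf n)) = Mf n A N * (2 * (A * Kf n)) := by ring
      _ ≤ Mf n A N * uf n A := Nat.mul_le_mul_left _ h.u_ge
      _ ≤ N := hMu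
      _ ≤ A * n := h.hNA
  have hMK : 2 * (Mf n A N * Kf n) ≤ n :=
    Nat.le_of_mul_le_mul_left h1 (by have := h.hA; omega)
  -- part 2
  have hme : mf n * ef A ≤ 2 * (A * Kf n) := by
    have h2 : mf n * 4 ≤ 2 * Kf n := by unfold mf; omega
    calc mf n * ef A = (mf n * 4) * A := by unfold ef; ring
      _ ≤ (2 * Kf n) * A := Nat.mul_le_mul_right _ h2
      _ = 2 * (A * Kf n) := by ring
  have hp2 : 1 ≤ 2 ^ mf n := Nat.one_le_two_pow
  have hrest : 2 * (uf n A + mf n * ef A * 2 ^ (mf n + 1)) ≤ n := by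
    have e2 : 2 * (mf n * ef A * 2 ^ (mf n + 1)) ≤ 16 * (A * Kf n) * 2 ^ mf n := by
      have hpow : (2:ℕ) ^ (mf n + 1) = 2 * 2 ^ mf n := by ring
      calc 2 * (mf n * ef A * 2 ^ (mf n + 1)) = (mf n * ef A) * (4 * 2 ^ mf n) := by
            rw [hpow]; ring
        _ ≤ (2 * (A * Kf n)) * (4 * 2 ^ mf n) := Nat.mul_le_mul_right _ hme
        _ = 8 * (A * Kf n) * 2 ^ mf n := by ring
        _ ≤ 16 * (A * Kf n) * 2 ^ mf n := by
            exact Nat.mul_le_mul_right _ (by nlinarith)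
    have e1 : 2 * uf n A ≤ 6 * (A * Kf n) * 2 ^ mf n := by
      calc 2 * uf n A ≤ 2 * (3 * (A * Kf n)) := Nat.mul_le_mul_left _ h.u_le
        _ = 6 * (A * Kf n) * 1 := by ring
        _ ≤ 6 * (A * Kf n) * 2 ^ mf n := Nat.mul_le_mul_left _ hp2
    have e3 : 6 * (A * Kf n) * 2 ^ mf n + 16 * (A * Kf n) * 2 ^ mf n
        = (22 * (A * Kf n)) * 2 ^ mf n := by ring
    have e4 : (22 * (A * Kf n)) * 2 ^ mf n ≤ 2 ^ mf n * 2 ^ mf n :=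
      Nat.mul_le_mul_right _ h.core_pow
    have e5 : (2:ℕ) ^ mf n * 2 ^ mf n ≤ 2 ^ Kf n := by
      rw [← pow_add]
      apply Nat.pow_le_pow_right (by norm_num)
      unfold mf; omega
    have e6 := h.pow_le
    omega
  unfold ORf
  omega

end Ctx


section Construction

variable {n A N : ℕ}

lemma dec_unique {P w c w' c' : ℕ} (hc : c < P) (hc' : c' < P)
    (he : w * P + c = w' * P + c') : w = w' ∧ c = c' := by
  have hP : 0 < P := by omega
  have h1 : (w * P + c) / P = w := by
    rw [mul_comm, Nat.mul_add_div hP, Nat.div_eq_of_lt hc]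
    omega
  have h2 : (w' * P + c') / P = w' := by
    rw [mul_comm, Nat.mul_add_div hP, Nat.div_eq_of_lt hc']
    omega
  have hw : w = w' := by rw [← h1, ← h2, he]
  constructor
  · exact hw
  · subst hw; omega

lemma pad_sub_lt (h : Ctx n A N) {p : ℕ} (hp : p < N) :
    p - Mf n A N * uf n A < uf n A := by
  have hupos := h.u_pos
  have hdm := Nat.div_add_mod N (uf n A)
  have hmod : N % uf n A < uf n A := Nat.mod_lt _ hupos
  have hMu2 : Mf n A N * uf n A = uf n A * (N / uf n A) := by unfold Mf; ring
  omega

lemma j_lt_m (h : Ctx n A N) {p : ℕ} (hfresh : ¬ p % uf n A < Kf n) :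
    (p % uf n A - Kf n) / ef A < mf n := by
  have hupos := h.u_pos
  have hepos : 0 < ef A := by unfold ef; have := h.hA; omega
  have hrlt : p % uf n A < uf n A := Nat.mod_lt _ hupos
  have hwlt : p % uf n A - Kf n < mf n * ef A := by
    have : uf n A = Kf n + mf n * ef A := rfl
    omega
  rw [Nat.div_lt_iff_lt_mul hepos]
  calc p % uf n A - Kf n < mf n * ef A := hwlt
    _ = mf n * ef A := rfl

lemma lett_pad {p : ℕ} (h1 : Mf n A N * uf n A ≤ p) :
    lett n A N p = Mf n A N * Kf n + (p - Mf n A N * uf n A) := by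
  unfold lett; rw [if_pos h1]

lemma lett_fresh {p : ℕ} (h1 : ¬ Mf n A N * uf n A ≤ p) (h2 : p % uf n A < Kf n) :
    lett n A N p = (p / uf n A) * Kf n + p % uf n A := by
  unfold lett; rw [if_neg h1, if_pos h2]

lemma lett_rep {p : ℕ} (h1 : ¬ Mf n A N * uf n A ≤ p) (h2 : ¬ p % uf n A < Kf n) :
    lett n A N p = ORf n A N + (p % uf n A - Kf n) * 2 ^ (mf n + 1)
      + (p / uf n A) % 2 ^ ((p % uf n A - Kf n) / ef A + 1) := by
  unfold lett; rw [if_neg h1, if_neg h2]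

lemma fresh_val_lt (h : Ctx n A N) {p : ℕ}
    (h1 : ¬ Mf n A N * uf n A ≤ p) (h2 : p % uf n A < Kf n) :
    lett n A N p < Mf n A N * Kf n := by
  have hupos := h.u_pos
  rw [lett_fresh h1 h2]
  have hM1 : p / uf n A < Mf n A N := by
    rw [Nat.div_lt_iff_lt_mul hupos]; omega
  have hstep : (p / uf n A) * Kf n + Kf n ≤ Mf n A N * Kf n := by
    calc (p / uf n A) * Kf n + Kf n = (p / uf n A + 1) * Kf n := by ring
      _ ≤ Mf n A N * Kf n := Nat.mul_le_mul_right _ hM1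
  have := h.hK
  omega

lemma nonrep_val_lt (h : Ctx n A N) {p : ℕ} (hp : p < N)
    (hcase : Mf n A N * uf n A ≤ p ∨ p % uf n A < Kf n) :
    lett n A N p < ORf n A N := by
  rcases hcase with h1 | h2
  · rw [lett_pad h1]
    have := pad_sub_lt h hp
    unfold ORf
    omega
  · by_cases h1 : Mf n A N * uf n A ≤ p
    · rw [lett_pad h1]
      have := pad_sub_lt h hp
      unfold ORf
      omega
    · have := fresh_val_lt h h1 h2
      have hupos := h.u_pos
      unfold ORf
      omega

lemma rep_val_ge (h : Ctx n A N) {p : ℕ}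
    (h1 : ¬ Mf n A N * uf n A ≤ p) (h2 : ¬ p % uf n A < Kf n) :
    ORf n A N ≤ lett n A N p := by
  rw [lett_rep h1 h2]
  omega

lemma lett_lt (h : Ctx n A N) {p : ℕ} (hp : p < N) : lett n A N p < n := by
  have halpha := h.alpha
  have hupos := h.u_pos
  by_cases h1 : Mf n A N * uf n A ≤ p
  · have := nonrep_val_lt h hp (Or.inl h1)
    unfold ORf at halpha
    unfold ORf at this
    omega
  · by_cases h2 : p % uf n A < Kf n
    · have := nonrep_val_lt h hp (Or.inr h2)
      unfold ORf at halpha this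
      omega
    · -- repeat branch
      rw [lett_rep h1 h2]
      have hj := j_lt_m h h2
      have hrlt : p % uf n A < uf n A := Nat.mod_lt _ hupos
      have hwlt : p % uf n A - Kf n < mf n * ef A := by
        have : uf n A = Kf n + mf n * ef A := rfl
        omega
      have hc : (p / uf n A) % 2 ^ ((p % uf n A - Kf n) / ef A + 1) < 2 ^ mf n := by
        calc (p / uf n A) % 2 ^ ((p % uf n A - Kf n) / ef A + 1)
            < 2 ^ ((p % uf n A - Kf n) / ef A + 1) :=
              Nat.mod_lt _ (Nat.pow_pos (by norm_num))
          _ ≤ 2 ^ mf n := Nat.pow_le_pow_right (by norm_num) (by omega)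
      have hkey : (p % uf n A - Kf n) * 2 ^ (mf n + 1) + 2 ^ mf n
          ≤ mf n * ef A * 2 ^ (mf n + 1) := by
        have ha1 : p % uf n A - Kf n + 1 ≤ mf n * ef A := hwlt
        have ha2 : (p % uf n A - Kf n + 1) * 2 ^ (mf n + 1)
            ≤ mf n * ef A * 2 ^ (mf n + 1) := Nat.mul_le_mul_right _ ha1
        have ha3 : (2:ℕ) ^ (mf n + 1) = 2 * 2 ^ mf n := by ring
        have ha4 : (p % uf n A - Kf n + 1) * 2 ^ (mf n + 1)
            = (p % uf n A - Kf n) * 2 ^ (mf n + 1) + 2 ^ (mf n + 1) := by ring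
        omega
      omega

lemma nonrep_inj (h : Ctx n A N) {p q : ℕ} (hp : p < N) (hq : q < N)
    (hcp : Mf n A N * uf n A ≤ p ∨ p % uf n A < Kf n)
    (hcq : Mf n A N * uf n A ≤ q ∨ q % uf n A < Kf n)
    (he : lett n A N p = lett n A N q) : p = q := by
  have hupos := h.u_pos
  have hK := h.hK
  by_cases h1p : Mf n A N * uf n A ≤ p <;> by_cases h1q : Mf n A N * uf n A ≤ q
  · rw [lett_pad h1p, lett_pad h1q] at he
    omega
  · -- p pad, q fresh
    exfalso
    have h2q : q % uf n A < Kf n := by tauto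
    have hv := fresh_val_lt h h1q h2q
    rw [lett_pad h1p] at he
    omega
  · exfalso
    have h2p : p % uf n A < Kf n := by tauto
    have hv := fresh_val_lt h h1p h2p
    rw [lett_pad h1q] at he
    omega
  · have h2p : p % uf n A < Kf n := by tauto
    have h2q : q % uf n A < Kf n := by tauto
    rw [lett_fresh h1p h2p, lett_fresh h1q h2q] at he
    obtain ⟨ht, hr⟩ := dec_unique h2p h2q (by
      calc (p / uf n A) * Kf n + p % uf n A = (q / uf n A) * Kf n + q % uf n A := he)
    have hp1 := Nat.div_add_mod p (uf n A)
    have hq1 := Nat.div_add_mod q (uf n A)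
    have : uf n A * (p / uf n A) = uf n A * (q / uf n A) := by rw [ht]
    omega

lemma coll (h : Ctx n A N) {p q : ℕ} (hp : p < N) (hq : q < N) (hpq : p < q)
    (he : lett n A N p = lett n A N q) :
    ∃ j s c, j < mf n ∧ s < ef A ∧ c < 2 ^ (j+1) ∧
      lett n A N p = ORf n A N + (ef A * j + s) * 2 ^ (mf n + 1) + c ∧
      2 ^ (j+1) * uf n A ≤ q - p ∧
      2 ^ (j+1) + p / uf n A ≤ q / uf n A := by
  have hupos := h.u_pos
  have hepos : 0 < ef A := by unfold ef; have := h.hA; omega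
  -- both must be in the repeat branch
  have hrep_p : ¬ Mf n A N * uf n A ≤ p ∧ ¬ p % uf n A < Kf n := by
    by_contra hc
    rcases Decidable.not_and_iff_or_not.mp hc with hc1 | hc2
    · have hcp : Mf n A N * uf n A ≤ p ∨ p % uf n A < Kf n := by tauto
      by_cases hcq : Mf n A N * uf n A ≤ q ∨ q % uf n A < Kf n
      · have := nonrep_inj h hp hq hcp hcq he
        omega
      · have hq1 : ¬ Mf n A N * uf n A ≤ q := fun hx => hcq (Or.inl hx)
        have hq2 : ¬ q % uf n A < Kf n := fun hx => hcq (Or.inr hx)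
        have hv1 := nonrep_val_lt h hp hcp
        have hv2 := rep_val_ge h hq1 hq2
        omega
    · have hcp : Mf n A N * uf n A ≤ p ∨ p % uf n A < Kf n := by tauto
      by_cases hcq : Mf n A N * uf n A ≤ q ∨ q % uf n A < Kf n
      · have := nonrep_inj h hp hq hcp hcq he
        omega
      · have hq1 : ¬ Mf n A N * uf n A ≤ q := fun hx => hcq (Or.inl hx)
        have hq2 : ¬ q % uf n A < Kf n := fun hx => hcq (Or.inr hx)
        have hv1 := nonrep_val_lt h hp hcp
        have hv2 := rep_val_ge h hq1 hq2
        omega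
  have hrep_q : ¬ Mf n A N * uf n A ≤ q ∧ ¬ q % uf n A < Kf n := by
    by_contra hc
    rcases Decidable.not_and_iff_or_not.mp hc with hc1 | hc2 <;>
    · have hcq : Mf n A N * uf n A ≤ q ∨ q % uf n A < Kf n := by tauto
      have hv1 := nonrep_val_lt h hq hcq
      have hv2 := rep_val_ge h hrep_p.1 hrep_p.2
      omega
  obtain ⟨h1p, h2p⟩ := hrep_p
  obtain ⟨h1q, h2q⟩ := hrep_q
  rw [lett_rep h1p h2p, lett_rep h1q h2q] at he
  set wp := p % uf n A - Kf n with hwp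
  set wq := q % uf n A - Kf n with hwq
  set jp := wp / ef A with hjp
  set jq := wq / ef A with hjq
  have hjpm : jp < mf n := j_lt_m h h2p
  have hjqm : jq < mf n := j_lt_m h h2q
  have hcp : (p / uf n A) % 2 ^ (jp + 1) < 2 ^ (mf n + 1) := by
    calc (p / uf n A) % 2 ^ (jp + 1) < 2 ^ (jp + 1) :=
        Nat.mod_lt _ (Nat.pow_pos (by norm_num))
      _ ≤ 2 ^ (mf n + 1) := Nat.pow_le_pow_right (by norm_num) (by omega)
  have hcq : (q / uf n A) % 2 ^ (jq + 1) < 2 ^ (mf n + 1) := by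
    calc (q / uf n A) % 2 ^ (jq + 1) < 2 ^ (jq + 1) :=
        Nat.mod_lt _ (Nat.pow_pos (by norm_num))
      _ ≤ 2 ^ (mf n + 1) := Nat.pow_le_pow_right (by norm_num) (by omega)
  have he2 : wp * 2 ^ (mf n + 1) + (p / uf n A) % 2 ^ (jp + 1)
      = wq * 2 ^ (mf n + 1) + (q / uf n A) % 2 ^ (jq + 1) := by
    rw [add_assoc, add_assoc] at he
    exact Nat.add_left_cancel he
  obtain ⟨hw, hc⟩ := dec_unique hcp hcq he2
  -- same residue r, same scale j
  have hr : p % uf n A = q % uf n A := by omega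
  have hj : jp = jq := by rw [hjp, hjq, hw]
  -- positions in same residue class mod 2^(jp+1)
  set D := 2 ^ (jp + 1) with hD
  clear_value D
  have hDpos : 0 < D := by rw [hD]; exact Nat.pow_pos (by norm_num)
  have htle : p / uf n A ≤ q / uf n A := Nat.div_le_div_right (le_of_lt hpq)
  have hpdm := Nat.div_add_mod p (uf n A)
  have hqdm := Nat.div_add_mod q (uf n A)
  have htne : p / uf n A ≠ q / uf n A := by
    intro hteq
    have : uf n A * (p / uf n A) = uf n A * (q / uf n A) := by rw [hteq]
    omega
  have htlt : p / uf n A < q / uf n A := lt_of_le_of_ne htle htne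
  have hmodeq : (p / uf n A) % D = (q / uf n A) % D := by
    have hDD : (2:ℕ) ^ (jq + 1) = D := by rw [hD, hj]
    rw [hDD] at hc
    exact hc
  have hdvd : D ∣ (q / uf n A - p / uf n A) :=
    (Nat.modEq_iff_dvd' (le_of_lt htlt)).mp hmodeq
  have hDle : D ≤ q / uf n A - p / uf n A := Nat.le_of_dvd (by omega) hdvd
  have hgap : D * uf n A ≤ q - p := by
    have h1 : uf n A * (p / uf n A + D) ≤ uf n A * (q / uf n A) :=
      Nat.mul_le_mul_left _ (by omega)
    have hp0 := Nat.div_add_mod p (uf n A)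
    have hq0 := Nat.div_add_mod q (uf n A)
    have hexp : uf n A * (p / uf n A + D) + p % uf n A = p + D * uf n A := by
      calc uf n A * (p / uf n A + D) + p % uf n A
          = (uf n A * (p / uf n A) + p % uf n A) + D * uf n A := by ring
        _ = p + D * uf n A := by rw [hp0]
    have h4 : p + D * uf n A ≤ q := by
      calc p + D * uf n A = uf n A * (p / uf n A + D) + p % uf n A := hexp.symm
        _ ≤ uf n A * (q / uf n A) + p % uf n A := Nat.add_le_add_right h1 _
        _ = uf n A * (q / uf n A) + q % uf n A := by rw [hr]
        _ = q := hq0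
    omega
  have hds : ef A * jp + wp % ef A = wp := by
    rw [hjp]; exact Nat.div_add_mod wp (ef A)
  have hgap2 : 2 ^ (jp + 1) * uf n A ≤ q - p := by rw [← hD]; exact hgap
  refine ⟨jp, wp % ef A, (p / uf n A) % 2 ^ (jp + 1), hjpm, Nat.mod_lt _ hepos,
    Nat.mod_lt _ (Nat.pow_pos (by norm_num)), ?_, hgap2, by omega⟩
  rw [lett_rep h1p h2p, ← hwp, ← hjp, hds]

end Construction


section Counting

variable {n A N : ℕ}

def lettF (n A N : ℕ) [NeZero n] (p : ℕ) : Fin n :=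
  ⟨lett n A N p % n, Nat.mod_lt _ (NeZero.pos n)⟩

lemma lettF_val (h : Ctx n A N) [NeZero n] {p : ℕ} (hp : p < N) :
    ((lettF n A N p : Fin n) : ℕ) = lett n A N p := by
  show lett n A N p % n = lett n A N p
  exact Nat.mod_eq_of_lt (lett_lt h hp)

lemma lettF_to_lett (h : Ctx n A N) [NeZero n] {p q : ℕ} (hp : p < N) (hq : q < N)
    (he : lettF n A N p = lettF n A N q) : lett n A N p = lett n A N q := by
  have := congrArg Fin.val he
  rwa [lettF_val h hp, lettF_val h hq] at this

lemma two_points [NeZero n] {x y : ℕ} {v : Fin n}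
    (hv : 2 ≤ ((Finset.Ico x y).filter (fun p => lettF n A N p = v)).card) :
    ∃ p q, x ≤ p ∧ p < y ∧ x ≤ q ∧ q < y ∧ p < q ∧
      lettF n A N p = v ∧ lettF n A N q = v := by
  obtain ⟨p, hp, q, hq, hne⟩ := Finset.one_lt_card.mp
    (show 1 < ((Finset.Ico x y).filter (fun p => lettF n A N p = v)).card by omega)
  rw [Finset.mem_filter, Finset.mem_Ico] at hp hq
  rcases Nat.lt_trichotomy p q with hlt | heq | hgt
  · exact ⟨p, q, hp.1.1, hp.1.2, hq.1.1, hq.1.2, hlt, hp.2, hq.2⟩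
  · exact absurd heq hne
  · exact ⟨q, p, hq.1.1, hq.1.2, hp.1.1, hp.1.2, hgt, hq.2, hp.2⟩

lemma gap_lemma (h : Ctx n A N) [NeZero n] {x y : ℕ} (hy : y ≤ N) {v : Fin n}
    (hv : 2 ≤ ((Finset.Ico x y).filter (fun p => lettF n A N p = v)).card) :
    2 * uf n A + 1 ≤ y - x := by
  obtain ⟨p, q, hp1, hp2, hq1, hq2, hpq, hpv, hqv⟩ := two_points hv
  have hpN : p < N := by omega
  have hqN : q < N := by omega
  have hle : lett n A N p = lett n A N q :=
    lettF_to_lett h hpN hqN (by rw [hpv, hqv])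
  obtain ⟨j, s, c, hj, hs, hc, hform, hgap, hdiv⟩ := coll h hpN hqN hpq hle
  have h2 : 2 * uf n A ≤ 2 ^ (j+1) * uf n A := by
    apply Nat.mul_le_mul_right
    have : (2:ℕ) ^ 1 ≤ 2 ^ (j+1) := Nat.pow_le_pow_right (by norm_num) (by omega)
    simpa using this
  have h3 : 2 * uf n A ≤ q - p := le_trans h2 hgap
  omega

lemma s_lower (h : Ctx n A N) [NeZero n] (x y : ℕ) (hy : y ≤ N) :
    Kf n * ((y - x) / uf n A - 1) ≤ ((Finset.Ico x y).image (lettF n A N)).card := by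
  have hupos := h.u_pos
  have hK := h.hK
  have hKu : Kf n ≤ uf n A := by
    have : uf n A = Kf n + mf n * ef A := rfl
    omega
  set u := uf n A with hu
  set Q := (y - x) / u with hQdef
  set φ : ℕ × ℕ → ℕ := fun z => (x / u + 1 + z.1) * u + z.2 with hφ
  have hmem : ∀ z ∈ (Finset.range (Q - 1)) ×ˢ (Finset.range (Kf n)),
      φ z ∈ Finset.Ico x y := by
    rintro ⟨i, r⟩ hz
    simp only [Finset.mem_product, Finset.mem_range] at hz
    obtain ⟨hi, hr⟩ := hz
    simp only [Finset.mem_Ico, hφ]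
    have hx0 := Nat.div_add_mod x u
    have hxmod : x % u < u := Nat.mod_lt _ (by omega)
    constructor
    · have h1 : (x/u + 1) * u ≤ (x/u + 1 + i) * u + r := by
        have := Nat.mul_le_mul_right u (show x/u + 1 ≤ x/u + 1 + i by omega)
        omega
      have h2 : (x/u + 1) * u = (x/u)*u + u := by ring
      have h3 : u * (x/u) = (x/u) * u := by ring
      omega
    · have hQu : Q * u ≤ y - x := by rw [hQdef]; exact Nat.div_mul_le_self _ _
      have h1 : (x/u + 2 + i) * u = (x/u + 1 + i) * u + u := by ring
      have h2 : (x/u + 2 + i) * u = (x/u)*u + (2 + i) * u := by ring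
      have h3 : (2 + i) * u ≤ Q * u := Nat.mul_le_mul_right _ (by omega)
      have h4 : u * (x/u) = (x/u)*u := by ring
      have h5 : 2 * u ≤ Q * u := Nat.mul_le_mul_right _ (by omega)
      omega
  have hinj : Set.InjOn (lettF n A N ∘ φ)
      (((Finset.range (Q - 1)) ×ˢ (Finset.range (Kf n)) : Finset (ℕ × ℕ)) : Set (ℕ × ℕ)) := by
    rintro ⟨i1, r1⟩ hz1 ⟨i2, r2⟩ hz2 he
    rw [Finset.mem_coe, Finset.mem_product, Finset.mem_range, Finset.mem_range] at hz1 hz2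
    have hm1 : φ (i1, r1) ∈ Finset.Ico x y := hmem _ (by
      simp only [Finset.mem_product, Finset.mem_range]; exact hz1)
    have hm2 : φ (i2, r2) ∈ Finset.Ico x y := hmem _ (by
      simp only [Finset.mem_product, Finset.mem_range]; exact hz2)
    rw [Finset.mem_Ico] at hm1 hm2
    have hN1 : φ (i1, r1) < N := by omega
    have hN2 : φ (i2, r2) < N := by omega
    have hlett : lett n A N (φ (i1, r1)) = lett n A N (φ (i2, r2)) :=
      lettF_to_lett h hN1 hN2 he
    have hmod1 : φ (i1, r1) % u = r1 := by
      show ((x/u + 1 + i1) * u + r1) % u = r1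
      rw [mul_comm (x/u + 1 + i1) u, Nat.mul_add_mod]
      exact Nat.mod_eq_of_lt (by omega)
    have hmod2 : φ (i2, r2) % u = r2 := by
      show ((x/u + 1 + i2) * u + r2) % u = r2
      rw [mul_comm (x/u + 1 + i2) u, Nat.mul_add_mod]
      exact Nat.mod_eq_of_lt (by omega)
    have hpos : φ (i1, r1) = φ (i2, r2) := by
      apply nonrep_inj h hN1 hN2 _ _ hlett
      · right; rw [hmod1]; omega
      · right; rw [hmod2]; omega
    have hdec := dec_unique (P := u) (by omega : r1 < u) (by omega : r2 < u) hpos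
    have : i1 = i2 := by omega
    subst this
    have : r1 = r2 := by omega
    subst this
    rfl
  have hcard : (((Finset.range (Q - 1)) ×ˢ (Finset.range (Kf n))).image
      (lettF n A N ∘ φ)).card = (Q - 1) * Kf n := by
    rw [Finset.card_image_of_injOn hinj, Finset.card_product, Finset.card_range,
      Finset.card_range]
  have hsub : ((Finset.range (Q - 1)) ×ˢ (Finset.range (Kf n))).image (lettF n A N ∘ φ)
      ⊆ (Finset.Ico x y).image (lettF n A N) := by
    intro v hv
    rw [Finset.mem_image] at hv ⊢
    obtain ⟨z, hz, rfl⟩ := hv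
    exact ⟨φ z, hmem z hz, rfl⟩
  calc Kf n * (Q - 1) = (Q - 1) * Kf n := by ring
    _ = _ := hcard.symm
    _ ≤ _ := Finset.card_le_card hsub

lemma s2_upper (h : Ctx n A N) [NeZero n] (x y : ℕ) (hy : y ≤ N) :
    (((Finset.Ico x y).image (lettF n A N)).filter
        (fun v => 2 ≤ ((Finset.Ico x y).filter (fun p => lettF n A N p = v)).card)).card
      ≤ 2 * ef A * ((y - 1) / uf n A - x / uf n A) := by
  set T := (y - 1) / uf n A - x / uf n A with hT
  set S2 := ((Finset.Ico x y).image (lettF n A N)).filter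
      (fun v => 2 ≤ ((Finset.Ico x y).filter (fun p => lettF n A N p = v)).card) with hS2
  set BU := ((Finset.range (mf n)).filter (fun j => 2 ^ (j+1) ≤ T)).biUnion
      (fun j => ((Finset.range (ef A)) ×ˢ (Finset.range (2 ^ (j+1)))).image
        (fun sc => ORf n A N + (ef A * j + sc.1) * 2 ^ (mf n + 1) + sc.2)) with hBU
  have hsub : S2.image Fin.val ⊆ BU := by
    intro w hw
    rw [Finset.mem_image] at hw
    obtain ⟨v, hv, rfl⟩ := hw
    rw [hS2, Finset.mem_filter] at hv
    obtain ⟨hvS, hcard⟩ := hv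
    obtain ⟨p, q, hp1, hp2, hq1, hq2, hpq, hpv, hqv⟩ := two_points hcard
    have hpN : p < N := by omega
    have hqN : q < N := by omega
    have hle : lett n A N p = lett n A N q :=
      lettF_to_lett h hpN hqN (by rw [hpv, hqv])
    obtain ⟨j, s, c, hj, hs, hc, hform, hgap, hdiv⟩ := coll h hpN hqN hpq hle
    have ht1 : x / uf n A ≤ p / uf n A := Nat.div_le_div_right hp1
    have ht2 : q / uf n A ≤ (y - 1) / uf n A := Nat.div_le_div_right (by omega)
    have hjT : 2 ^ (j+1) ≤ T := by omega
    rw [hBU, Finset.mem_biUnion]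
    refine ⟨j, Finset.mem_filter.mpr ⟨Finset.mem_range.mpr hj, hjT⟩, ?_⟩
    rw [Finset.mem_image]
    refine ⟨(s, c), Finset.mem_product.mpr
      ⟨Finset.mem_range.mpr hs, Finset.mem_range.mpr hc⟩, ?_⟩
    have hvval : (v : ℕ) = lett n A N p := by rw [← hpv]; exact lettF_val h hpN
    rw [hvval, hform]
  have hcards : S2.card ≤ BU.card := by
    have h1 : S2.card = (S2.image Fin.val).card :=
      (Finset.card_image_of_injective _ Fin.val_injective).symm
    rw [h1]
    exact Finset.card_le_card hsub
  have hBUcard : BU.card ≤ 2 * ef A * T := by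
    set J := Nat.log 2 T with hJ
    have hFsub : (Finset.range (mf n)).filter (fun j => 2 ^ (j+1) ≤ T)
        ⊆ Finset.range J := by
      intro j hjmem
      rw [Finset.mem_filter] at hjmem
      rw [Finset.mem_range]
      have hTpos : T ≠ 0 := by
        have : (0:ℕ) < 2 ^ (j+1) := Nat.pow_pos (by norm_num)
        omega
      have := (Nat.le_log_iff_pow_le (by norm_num) hTpos).mpr hjmem.2
      omega
    calc BU.card ≤ ∑ j ∈ (Finset.range (mf n)).filter (fun j => 2 ^ (j+1) ≤ T),
          (((Finset.range (ef A)) ×ˢ (Finset.range (2 ^ (j+1)))).image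
            (fun sc => ORf n A N + (ef A * j + sc.1) * 2 ^ (mf n + 1) + sc.2)).card :=
          Finset.card_biUnion_le
      _ ≤ ∑ j ∈ (Finset.range (mf n)).filter (fun j => 2 ^ (j+1) ≤ T),
          ef A * 2 ^ (j+1) := by
          apply Finset.sum_le_sum
          intro j _
          calc _ ≤ ((Finset.range (ef A)) ×ˢ (Finset.range (2 ^ (j+1)))).card :=
                Finset.card_image_le
            _ = ef A * 2 ^ (j+1) := by
                rw [Finset.card_product, Finset.card_range, Finset.card_range]
      _ ≤ ∑ j ∈ Finset.range J, ef A * 2 ^ (j+1) := by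
          apply Finset.sum_le_sum_of_subset hFsub
      _ = ef A * ∑ j ∈ Finset.range J, 2 ^ (j+1) := by rw [Finset.mul_sum]
      _ = ef A * (2 ^ (J+1) - 2) := by rw [sum_two_pow]
      _ ≤ 2 * ef A * T := by
          rcases Nat.eq_zero_or_pos T with hT0 | hTpos
          · rw [hT0]
            have : J = 0 := by rw [hJ, hT0]; exact Nat.log_zero_right 2
            rw [this]
            norm_num
          · have h2J : 2 ^ J ≤ T := by
              rw [hJ]; exact Nat.pow_log_le_self 2 (by omega)
            have h2J1 : 2 ^ (J+1) - 2 ≤ 2 * T := by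
              have : (2:ℕ) ^ (J+1) = 2 * 2 ^ J := by ring
              omega
            calc ef A * (2 ^ (J+1) - 2) ≤ ef A * (2 * T) := Nat.mul_le_mul_left _ h2J1
              _ = 2 * ef A * T := by ring
  omega

lemma block_bound (h : Ctx n A N) [NeZero n] (x y : ℕ) (hy : y ≤ N)
    (hne : (((Finset.Ico x y).image (lettF n A N)).filter
        (fun v => 2 ≤ ((Finset.Ico x y).filter (fun p => lettF n A N p = v)).card)).Nonempty) :
    ∃ Q : ℕ, 2 ≤ Q ∧
      (((Finset.Ico x y).image (lettF n A N)).filter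
        (fun v => 2 ≤ ((Finset.Ico x y).filter (fun p => lettF n A N p = v)).card)).card
        ≤ 3 * ef A * Q ∧
      Kf n * Q ≤ 2 * ((Finset.Ico x y).image (lettF n A N)).card := by
  obtain ⟨v, hvmem⟩ := hne
  rw [Finset.mem_filter] at hvmem
  have hgap := gap_lemma h hy hvmem.2
  have hupos := h.u_pos
  have hQ2 : 2 ≤ (y - x) / uf n A := by
    rw [Nat.le_div_iff_mul_le hupos]
    omega
  refine ⟨(y - x) / uf n A, hQ2, ?_, ?_⟩
  · have h1 := s2_upper h x y hy
    have hT : (y - 1) / uf n A - x / uf n A ≤ (y - x) / uf n A + 1 := by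
      have hxy : x + (2 * uf n A + 1) ≤ y := by omega
      have hadd := add_div_le x (y - 1 - x) (uf n A) hupos
      have h2 : x + (y - 1 - x) = y - 1 := by omega
      rw [h2] at hadd
      have h3 : (y - 1 - x) / uf n A ≤ (y - x) / uf n A := Nat.div_le_div_right (by omega)
      omega
    calc _ ≤ 2 * ef A * ((y - 1) / uf n A - x / uf n A) := h1
      _ ≤ 2 * ef A * ((y - x) / uf n A + 1) := Nat.mul_le_mul_left _ hT
      _ = ef A * (2 * ((y - x) / uf n A + 1)) := by ring
      _ ≤ ef A * (3 * ((y - x) / uf n A)) := Nat.mul_le_mul_left _ (by omega)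
      _ = 3 * ef A * ((y - x) / uf n A) := by ring
  · have h2 := s_lower h x y hy
    have h3 : Kf n * ((y - x) / uf n A) ≤ 2 * (Kf n * ((y - x) / uf n A - 1)) := by
      calc Kf n * ((y - x) / uf n A)
          ≤ Kf n * (2 * ((y - x) / uf n A - 1)) := Nat.mul_le_mul_left _ (by omega)
        _ = 2 * (Kf n * ((y - x) / uf n A - 1)) := by ring
    omega

end Counting

end S15

/-- For every `a > 1` there is a constant `C > 0` such that for every `n` (here `n ≥ 2`,
so that `log n > 0`) there is a word `L` of length `⌊a n⌋` over an alphabet of `n` letters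
such that every contiguous block `B` of `L` satisfies `s₂(B)/s(B) ≤ C / log n`. -/
theorem stmt15 (a : ℝ) (ha : 1 < a) :
    ∃ C : ℝ, 0 < C ∧ ∀ n : ℕ, 2 ≤ n →
      ∃ L : List (Fin n), (L.length : ℤ) = ⌊a * n⌋ ∧
        ∀ i j : ℕ,
          (((((L.take j).drop i).toFinset.filter
              fun v => 2 ≤ ((L.take j).drop i).count v).card : ℝ) /
            ((L.take j).drop i).toFinset.card) ≤ C / Real.log n := by
  set A := ⌈a⌉₊ with hAdef
  have hA2 : 2 ≤ A := by
    have : 1 < ⌈a⌉₊ := by rw [Nat.lt_ceil]; exact_mod_cast ha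
    omega
  have hA2R : (2:ℝ) ≤ (A:ℝ) := by exact_mod_cast hA2
  have haA : a ≤ (A:ℝ) := Nat.le_ceil a
  refine ⟨200 * (A:ℝ) * A + 2000, by positivity, ?_⟩
  intro n hn
  have hn0 : 0 < n := by omega
  haveI : NeZero n := ⟨by omega⟩
  have hlogpos : 0 < Real.log n := Real.log_pos (by exact_mod_cast hn)
  set N := (⌊a * n⌋).toNat with hNdef
  have hfloor_nonneg : (0:ℤ) ≤ ⌊a * n⌋ :=
    Int.floor_nonneg.mpr (by positivity)
  have hNZ : (N : ℤ) = ⌊a * n⌋ := Int.toNat_of_nonneg hfloor_nonneg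
  have hNA : N ≤ A * n := by
    have h2 : a * n ≤ ((A * n : ℕ) : ℝ) := by
      push_cast
      exact mul_le_mul_of_nonneg_right haA (by positivity)
    have h1 : (⌊a * n⌋ : ℤ) ≤ ((A * n : ℕ) : ℤ) := by
      have := Int.floor_le_floor h2
      rwa [Int.floor_natCast] at this
    omega
  -- bound on log n in the small case
  have hlogn_le : Real.log n ≤ (S15.Kf n + 1 : ℝ) := by
    have h1 : (n:ℝ) ≤ ((2 ^ (S15.Kf n + 1) : ℕ) : ℝ) := by
      exact_mod_cast (Nat.lt_pow_succ_log_self (by norm_num) n).le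
    have h2 : Real.log n ≤ Real.log ((2:ℝ) ^ (S15.Kf n + 1)) := by
      apply Real.log_le_log (by exact_mod_cast hn0)
      push_cast at h1 ⊢
      exact h1
    rw [Real.log_pow] at h2
    push_cast at h2
    have h3 : Real.log 2 ≤ 1 := by
      have := Real.log_two_lt_d9
      linarith
    calc Real.log n ≤ ((S15.Kf n : ℝ) + 1) * Real.log 2 := h2
      _ ≤ (S15.Kf n + 1) * 1 := by
          apply mul_le_mul_of_nonneg_left h3 (by positivity)
      _ = (S15.Kf n + 1 : ℝ) := by ring
  by_cases hmain : 1000 ≤ S15.Kf n ∧ 100 * A * A ≤ S15.Kf n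
  · -- main construction
    have hctx : S15.Ctx n A N := ⟨hA2, hmain.1, hmain.2, hNA⟩
    refine ⟨(List.range N).map (S15.lettF n A N), ?_, ?_⟩
    · rw [List.length_map, List.length_range]; exact hNZ
    · intro i j
      have hbl : ((((List.range N).map (S15.lettF n A N)).take j).drop i)
          = (List.range' (min i (min j N)) (min j N - min i (min j N))).map
              (S15.lettF n A N) := by
        rw [← List.map_take, ← List.map_drop, S15.take_drop_range]
      rw [hbl, S15.toFinset_block]
      simp only [S15.count_block]
      have hxy : min i (min j N) + (min j N - min i (min j N)) = min j N := by omega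
      rw [hxy]
      set x := min i (min j N) with hxdef
      set y := min j N with hydef
      have hyN : y ≤ N := by omega
      rcases Finset.eq_empty_or_nonempty
        (((Finset.Ico x y).image (S15.lettF n A N)).filter
          (fun v => 2 ≤ ((Finset.Ico x y).filter
            (fun p => S15.lettF n A N p = v)).card)) with hS2e | hS2ne
      · rw [hS2e]
        simp only [Finset.card_empty, Nat.cast_zero, zero_div]
        positivity
      · obtain ⟨Q, hQ2, hs2, hs⟩ := S15.block_bound hctx x y hyN hS2ne
        have hKQ : 1000 * 2 ≤ S15.Kf n * Q := Nat.mul_le_mul hctx.hK hQ2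
        have hspos : 0 < ((Finset.Ico x y).image (S15.lettF n A N)).card := by omega
        have hsposR : (0:ℝ) < (((Finset.Ico x y).image (S15.lettF n A N)).card : ℝ) := by
          exact_mod_cast hspos
        rw [div_le_div_iff₀ hsposR hlogpos]
        have c1 : ((((Finset.Ico x y).image (S15.lettF n A N)).filter
            (fun v => 2 ≤ ((Finset.Ico x y).filter
              (fun p => S15.lettF n A N p = v)).card)).card : ℝ)
            ≤ 3 * (S15.ef A : ℝ) * Q := by exact_mod_cast hs2
        have c2 : (S15.Kf n : ℝ) * Q ≤ 2 * (((Finset.Ico x y).image (S15.lettF n A N)).card : ℝ) := by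
          exact_mod_cast hs
        have hlogK : Real.log n ≤ (S15.Kf n : ℝ) := by
          have hK1000 : (1000:ℝ) ≤ (S15.Kf n : ℝ) := by exact_mod_cast hmain.1
          have h1 : (n:ℝ) ≤ ((2 ^ (S15.Kf n + 1) : ℕ) : ℝ) := by
            exact_mod_cast (Nat.lt_pow_succ_log_self (by norm_num) n).le
          have h2 : Real.log n ≤ Real.log ((2:ℝ) ^ (S15.Kf n + 1)) := by
            apply Real.log_le_log (by exact_mod_cast hn0)
            push_cast at h1 ⊢
            exact h1
          rw [Real.log_pow] at h2
          have h3 : Real.log 2 ≤ 0.7 := by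
            have := Real.log_two_lt_d9
            linarith
          have h4 : ((S15.Kf n : ℝ) + 1) * Real.log 2 ≤ ((S15.Kf n : ℝ) + 1) * 0.7 := by
            apply mul_le_mul_of_nonneg_left h3 (by positivity)
          push_cast at h2
          nlinarith [Real.log_nonneg (show (1:ℝ) ≤ n by exact_mod_cast hn0)]
        have heA : (S15.ef A : ℝ) = 4 * A := by
          show ((4 * A : ℕ) : ℝ) = 4 * A
          push_cast
          ring
        have hQ0 : (0:ℝ) ≤ (Q:ℝ) := by positivity
        have hcard0 : (0:ℝ) ≤ (((Finset.Ico x y).image (S15.lettF n A N)).card : ℝ) := by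
          positivity
        calc ((((Finset.Ico x y).image (S15.lettF n A N)).filter
            (fun v => 2 ≤ ((Finset.Ico x y).filter
              (fun p => S15.lettF n A N p = v)).card)).card : ℝ) * Real.log n
            ≤ (3 * (S15.ef A : ℝ) * Q) * (S15.Kf n : ℝ) := by
              apply mul_le_mul c1 hlogK (le_of_lt hlogpos) (by positivity)
          _ = 3 * (S15.ef A : ℝ) * ((S15.Kf n : ℝ) * Q) := by ring
          _ ≤ 3 * (S15.ef A : ℝ) *
              (2 * (((Finset.Ico x y).image (S15.lettF n A N)).card : ℝ)) := by
              apply mul_le_mul_of_nonneg_left c2 (by positivity)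
          _ = 24 * (A:ℝ) * (((Finset.Ico x y).image (S15.lettF n A N)).card : ℝ) := by
              rw [heA]; ring
          _ ≤ (200 * (A:ℝ) * A + 2000) *
              (((Finset.Ico x y).image (S15.lettF n A N)).card : ℝ) := by
              apply mul_le_mul_of_nonneg_right _ hcard0
              nlinarith
  · -- trivial word : any word works since the ratio is ≤ 1 ≤ C / log n
    refine ⟨(List.range N).map (fun p => (⟨p % n, Nat.mod_lt _ hn0⟩ : Fin n)), ?_, ?_⟩
    · rw [List.length_map, List.length_range]; exact hNZ
    · intro i j
      have h1 := S15.ratio_le_one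
        ((((List.range N).map (fun p => (⟨p % n, Nat.mod_lt _ hn0⟩ : Fin n))).take j).drop i)
        (fun v => 2 ≤ ((((List.range N).map
          (fun p => (⟨p % n, Nat.mod_lt _ hn0⟩ : Fin n))).take j).drop i).count v)
      refine le_trans h1 ?_
      rw [le_div_iff₀ hlogpos]
      have hKb : S15.Kf n + 1 ≤ 1000 + 100 * A * A := by
        rcases Decidable.not_and_iff_or_not.mp hmain with hc | hc <;> omega
      have hKbR : (S15.Kf n : ℝ) + 1 ≤ 1000 + 100 * (A:ℝ) * A := by exact_mod_cast hKb
      nlinarith [hlogn_le]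
end

section
/- Let A₁,...,A_m be finite sets and independently pick a uniform element from each. For any element x, let U_x be the event that x is never picked. Then the events {U_x} are negatively correlated: for any finite set S of elements and t ∉ S, P(U_t | ⋂_{s∈S} U_s) ≤ P(U_t) and P(U_tᶜ | ⋂_{s∈S} U_sᶜ) ≤ P(U_tᶜ). -/
open MeasureTheory ProbabilityTheory Finset
open scoped ENNReal

namespace Stmt16Aux

variable {α : Type*} [DecidableEq α] [MeasurableSpace α] [MeasurableSingletonClass α] {m : ℕ}

lemma piFinset_filter {β : Type*} [DecidableEq β] (B : Fin m → Finset β)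
    (p : Fin m → β → Prop) [∀ i, DecidablePred (p i)] :
    (Fintype.piFinset B).filter (fun w => ∀ i, p i (w i))
      = Fintype.piFinset (fun i => (B i).filter (p i)) := by
  ext w
  simp only [Finset.mem_filter, Fintype.mem_piFinset, forall_and]

lemma measure_eq (A : Fin m → Finset α) (hA : ∀ i, (A i).Nonempty)
    (F : Set ((i : Fin m) → α)) [DecidablePred (· ∈ F)] :
    Measure.pi (fun i => (PMF.uniformOfFinset (A i) (hA i)).toMeasure) F
      = ((Fintype.piFinset A).filter (· ∈ F)).card * ∏ i, ((A i).card : ℝ≥0∞)⁻¹ := by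
  set ν := fun i => (PMF.uniformOfFinset (A i) (hA i)).toMeasure with hν
  have hnull : Measure.pi ν (↑(Fintype.piFinset A) : Set ((i : Fin m) → α))ᶜ = 0 := by
    have hsub : (↑(Fintype.piFinset A) : Set ((i : Fin m) → α))ᶜ ⊆
        ⋃ i, Function.eval i ⁻¹' (↑(A i) : Set α)ᶜ := by
      intro f hf
      simp only [Set.mem_compl_iff, Finset.mem_coe, Fintype.mem_piFinset, not_forall] at hf
      obtain ⟨i, hi⟩ := hf
      exact Set.mem_iUnion.2 ⟨i, hi⟩
    refine measure_mono_null hsub (measure_iUnion_null fun i => ?_)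
    refine Measure.pi_eval_preimage_null _ ?_
    rw [hν, PMF.toMeasure_apply_eq_zero_iff _ ((A i).finite_toSet.measurableSet.compl)]
    simp only [PMF.support_uniformOfFinset]
    exact disjoint_compl_right
  have hsingle : ∀ f ∈ Fintype.piFinset A,
      Measure.pi ν ({f} : Set ((i : Fin m) → α)) = ∏ i, ((A i).card : ℝ≥0∞)⁻¹ := by
    intro f hf
    have h1 : ({f} : Set ((i : Fin m) → α)) = Set.pi Set.univ (fun i => {f i}) := by
      ext g
      simp [Set.mem_pi, funext_iff]
    rw [h1, Measure.pi_pi]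
    refine Finset.prod_congr rfl fun i _ => ?_
    show (PMF.uniformOfFinset (A i) (hA i)).toMeasure {f i} = _
    rw [PMF.toMeasure_apply_singleton _ _ (measurableSet_singleton _),
      PMF.uniformOfFinset_apply_of_mem (hA i) (Fintype.mem_piFinset.1 hf i)]
  have hdecomp : F ∩ ↑(Fintype.piFinset A)
      = ⋃ f ∈ (Fintype.piFinset A).filter (· ∈ F), ({f} : Set ((i : Fin m) → α)) := by
    ext g
    simp only [Set.mem_inter_iff, Finset.mem_coe, Set.mem_iUnion, Finset.mem_filter,
      Set.mem_singleton_iff]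
    constructor
    · rintro ⟨hg1, hg2⟩; exact ⟨g, ⟨hg2, hg1⟩, rfl⟩
    · rintro ⟨f, ⟨hf1, hf2⟩, rfl⟩; exact ⟨hf2, hf1⟩
  rw [← measure_inter_conull hnull, hdecomp,
    measure_biUnion_finset ?_ (fun _ _ => measurableSet_singleton _)]
  · rw [Finset.sum_congr rfl (fun f hf => hsingle f (Finset.mem_filter.1 hf).1),
      Finset.sum_const, nsmul_eq_mul]
  · intro x _ y _ hxy
    simp only [Function.onFun, Set.disjoint_singleton_left, Set.mem_singleton_iff]
    exact hxy

open scoped Classical in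
lemma count_key (A : Fin m → Finset α) (S : Finset α) (t : α) (ht : t ∉ S) :
    ((Fintype.piFinset A).filter (fun f => ∀ s ∈ S, ∃ i, f i = s)).card
        * ∏ i, ((A i).erase t).card
    ≤ ((Fintype.piFinset (fun i => (A i).erase t)).filter
          (fun f => ∀ s ∈ S, ∃ i, f i = s)).card * ∏ i, (A i).card := by
  set A' : Fin m → Finset α := fun i => (A i).erase t with hA'
  set P : ((i : Fin m) → α) → Prop := fun f => ∀ s ∈ S, ∃ i, f i = s with hP
  set W : Finset ((i : Fin m) → α × α) := Fintype.piFinset (fun i => A i ×ˢ A' i) with hW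
  set σ : α × α → α := fun z => if z.1 = t then z.2 else z.1 with hσ
  -- Step A : card of first-coordinate event
  have hcardA : (W.filter (fun w => P (fun i => (w i).1))).card
      = ((Fintype.piFinset A).filter P).card * ∏ i, (A' i).card := by
    rw [Finset.card_eq_sum_card_fiberwise
      (f := fun w => (fun i => (w i).1)) (t := (Fintype.piFinset A).filter P)
      (fun w hw => by
        rcases Finset.mem_filter.1 hw with ⟨hw1, hw2⟩
        refine Finset.mem_filter.2 ⟨Fintype.mem_piFinset.2 fun i => ?_, hw2⟩
        exact (Finset.mem_product.1 (Fintype.mem_piFinset.1 hw1 i)).1)]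
    rw [Finset.sum_congr rfl (fun f hf => ?_), Finset.sum_const, smul_eq_mul]
    rcases Finset.mem_filter.1 hf with ⟨hf1, hf2⟩
    have hfib : (W.filter (fun w => P (fun i => (w i).1))).filter
        (fun w => (fun i => (w i).1) = f) = W.filter (fun w => ∀ i, (w i).1 = f i) := by
      ext w
      simp only [Finset.mem_filter, funext_iff, and_assoc]
      constructor
      · rintro ⟨h1, _, h3⟩; exact ⟨h1, h3⟩
      · rintro ⟨h1, h3⟩
        refine ⟨h1, fun s hs => ?_, h3⟩
        obtain ⟨i, hi⟩ := hf2 s hs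
        exact ⟨i, (h3 i).trans hi⟩
    have hfib2 : (Fintype.piFinset fun i => A i ×ˢ A' i).filter
        (fun w => ∀ i, (w i).1 = f i)
        = Fintype.piFinset (fun i => (A i ×ˢ A' i).filter (fun z => z.1 = f i)) := by
      ext w
      simp only [Finset.mem_filter, Fintype.mem_piFinset, forall_and]
    rw [hfib, hW, hfib2, Fintype.card_piFinset]
    refine Finset.prod_congr rfl fun i _ => ?_
    have : (A i ×ˢ A' i).filter (fun z => z.1 = f i) = {f i} ×ˢ A' i := by
      ext z
      simp only [Finset.mem_filter, Finset.mem_product, Finset.mem_singleton]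
      have hfi : f i ∈ A i := Fintype.mem_piFinset.1 hf1 i
      constructor
      · rintro ⟨⟨_, h2⟩, h3⟩; exact ⟨h3, h2⟩
      · rintro ⟨h3, h2⟩; exact ⟨⟨h3 ▸ hfi, h2⟩, h3⟩
    rw [this, Finset.card_product, Finset.card_singleton, one_mul]
  -- Step B : subset
  have hsub : W.filter (fun w => P (fun i => (w i).1))
      ⊆ W.filter (fun w => P (fun i => σ (w i))) := by
    intro w hw
    rcases Finset.mem_filter.1 hw with ⟨hw1, hw2⟩
    refine Finset.mem_filter.2 ⟨hw1, fun s hs => ?_⟩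
    obtain ⟨i, hi⟩ := hw2 s hs
    have hi' : (w i).1 = s := hi
    have hne : (w i).1 ≠ t := by rw [hi']; exact fun hh => ht (hh ▸ hs)
    refine ⟨i, ?_⟩
    simp only [hσ, if_neg hne]
    exact hi'
  -- Step C : card of σ event
  have hcardC : (W.filter (fun w => P (fun i => σ (w i)))).card
      = ((Fintype.piFinset A').filter P).card * ∏ i, (A i).card := by
    rw [Finset.card_eq_sum_card_fiberwise
      (f := fun w => (fun i => σ (w i))) (t := (Fintype.piFinset A').filter P)
      (fun w hw => by
        rcases Finset.mem_filter.1 hw with ⟨hw1, hw2⟩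
        refine Finset.mem_filter.2 ⟨Fintype.mem_piFinset.2 fun i => ?_, hw2⟩
        rcases Finset.mem_product.1 (Fintype.mem_piFinset.1 hw1 i) with ⟨h1, h2⟩
        by_cases hwt : (w i).1 = t
        · simpa only [hσ, if_pos hwt] using h2
        · simp only [hσ, if_neg hwt]
          exact Finset.mem_erase.2 ⟨hwt, h1⟩)]
    rw [Finset.sum_congr rfl (fun h hf => ?_), Finset.sum_const, smul_eq_mul]
    rcases Finset.mem_filter.1 hf with ⟨hf1, hf2⟩
    have hfib : (W.filter (fun w => P (fun i => σ (w i)))).filter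
        (fun w => (fun i => σ (w i)) = h) = W.filter (fun w => ∀ i, σ (w i) = h i) := by
      ext w
      simp only [Finset.mem_filter, funext_iff, and_assoc]
      constructor
      · rintro ⟨h1, _, h3⟩; exact ⟨h1, h3⟩
      · rintro ⟨h1, h3⟩
        refine ⟨h1, fun s hs => ?_, h3⟩
        obtain ⟨i, hi⟩ := hf2 s hs
        exact ⟨i, (h3 i).trans hi⟩
    have hfib2 : (Fintype.piFinset fun i => A i ×ˢ A' i).filter
        (fun w => ∀ i, σ (w i) = h i)
        = Fintype.piFinset (fun i => (A i ×ˢ A' i).filter (fun z => σ z = h i)) := by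
      ext w
      simp only [Finset.mem_filter, Fintype.mem_piFinset, forall_and]
    rw [hfib, hW, hfib2, Fintype.card_piFinset]
    refine Finset.prod_congr rfl fun i _ => ?_
    have hhi : h i ∈ A' i := Fintype.mem_piFinset.1 hf1 i
    rcases Finset.mem_erase.1 hhi with ⟨hhit, hhiA⟩
    by_cases htA : t ∈ A i
    · have heq : (A i ×ˢ A' i).filter (fun z => σ z = h i)
          = insert (t, h i) ({h i} ×ˢ A' i) := by
        ext z
        simp only [Finset.mem_filter, Finset.mem_product, Finset.mem_insert,
          Finset.mem_singleton, hσ, Prod.ext_iff]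
        constructor
        · rintro ⟨⟨h1, h2⟩, h3⟩
          by_cases hzt : z.1 = t
          · left; rw [if_pos hzt] at h3; exact ⟨hzt, h3⟩
          · right; rw [if_neg hzt] at h3; exact ⟨h3, h2⟩
        · rintro (⟨h1, h2⟩ | ⟨h1, h2⟩)
          · refine ⟨⟨h1 ▸ htA, h2 ▸ hhi⟩, ?_⟩
            rw [if_pos h1]; exact h2
          · refine ⟨⟨h1 ▸ hhiA, h2⟩, ?_⟩
            rw [if_neg (h1 ▸ hhit)]; exact h1
      rw [heq, Finset.card_insert_of_notMem (by
        simp only [Finset.mem_product, Finset.mem_singleton]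
        exact fun hc => hhit hc.1.symm), Finset.card_product, Finset.card_singleton, one_mul]
      exact Finset.card_erase_add_one htA
    · have hAA : A' i = A i := Finset.erase_eq_of_notMem htA
      have heq : (A i ×ˢ A' i).filter (fun z => σ z = h i) = {h i} ×ˢ A' i := by
        ext z
        simp only [Finset.mem_filter, Finset.mem_product, Finset.mem_singleton]
        constructor
        · rintro ⟨⟨h1, h2⟩, h3⟩
          have hzt : z.1 ≠ t := fun hc => htA (hc ▸ h1)
          rw [hσ] at h3
          simp only [if_neg hzt] at h3
          exact ⟨h3, h2⟩
        · rintro ⟨h1, h2⟩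
          have hzt : z.1 ≠ t := h1 ▸ hhit
          exact ⟨⟨h1 ▸ hhiA, h2⟩, by simp only [hσ, if_neg hzt]; exact h1⟩
      rw [heq, Finset.card_product, Finset.card_singleton, one_mul, hAA]
  calc ((Fintype.piFinset A).filter P).card * ∏ i, (A' i).card
      = (W.filter (fun w => P (fun i => (w i).1))).card := hcardA.symm
    _ ≤ (W.filter (fun w => P (fun i => σ (w i)))).card := Finset.card_le_card hsub
    _ = ((Fintype.piFinset A').filter P).card * ∏ i, (A i).card := hcardC

end Stmt16Aux

open Stmt16Aux

/-- Pick independently a uniform element from each finite set `A i`, and let `U x` be the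
event that `x` is never picked.  The events `U x` are negatively correlated: conditioning
on any family of events `U s` can only decrease `P(U t)` (for `t` not in the family), and
likewise for complements. -/
theorem stmt16 {α : Type*} [DecidableEq α] [MeasurableSpace α] [MeasurableSingletonClass α]
    {m : ℕ} (A : Fin m → Finset α) (hA : ∀ i, (A i).Nonempty)
    (μ : Measure ((i : Fin m) → α))
    (hμ : μ = Measure.pi fun i => (PMF.uniformOfFinset (A i) (hA i)).toMeasure)
    (U : α → Set ((i : Fin m) → α)) (hU : ∀ x, U x = {f | ∀ i, f i ≠ x})
    (S : Finset α) (t : α) (ht : t ∉ S) :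
    (μ[|⋂ s ∈ S, U s]) (U t) ≤ μ (U t) ∧
    (μ[|⋂ s ∈ S, (U s)ᶜ]) (U t)ᶜ ≤ μ (U t)ᶜ := by
  classical
  subst hμ
  set μ := Measure.pi fun i => (PMF.uniformOfFinset (A i) (hA i)).toMeasure with hμ
  haveI : IsProbabilityMeasure μ := by rw [hμ]; infer_instance
  -- measurability
  have hUm : ∀ x, MeasurableSet (U x) := by
    intro x
    rw [hU]
    have : {f : (i : Fin m) → α | ∀ i, f i ≠ x} = ⋂ i, Function.eval i ⁻¹' ({x}ᶜ) := by
      ext g; simp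
    rw [this]
    exact MeasurableSet.iInter fun i =>
      (measurableSet_singleton x).compl.preimage (measurable_pi_apply i)
  have hE1m : MeasurableSet (⋂ s ∈ S, U s) :=
    MeasurableSet.biInter S.countable_toSet fun s _ => hUm s
  have hE2m : MeasurableSet (⋂ s ∈ S, (U s)ᶜ) :=
    MeasurableSet.biInter S.countable_toSet fun s _ => (hUm s).compl
  -- basic cardinal facts
  have hane : ∀ i, ((A i).card : ℝ≥0∞) ≠ 0 := by
    intro i
    simp only [ne_eq, Nat.cast_eq_zero, Finset.card_eq_zero]
    exact (hA i).ne_empty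
  have hmul1 : ∀ i, ((A i).card : ℝ≥0∞) * ((A i).card : ℝ≥0∞)⁻¹ = 1 := fun i =>
    ENNReal.mul_inv_cancel (hane i) (ENNReal.natCast_ne_top _)
  -- filter identities
  have hfUt : (Fintype.piFinset A).filter (· ∈ U t)
      = Fintype.piFinset (fun i => (A i).erase t) := by
    ext f
    simp [hU, Fintype.mem_piFinset, Finset.mem_erase, forall_and, and_comm]
  have hfE1 : (Fintype.piFinset A).filter (· ∈ ⋂ s ∈ S, U s)
      = Fintype.piFinset (fun i => A i \ S) := by
    ext f
    simp only [Finset.mem_filter, Fintype.mem_piFinset, Set.mem_iInter, hU,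
      Set.mem_setOf_eq, Finset.mem_sdiff]
    constructor
    · rintro ⟨h1, h2⟩ i
      exact ⟨h1 i, fun hc => h2 _ hc i rfl⟩
    · intro h
      exact ⟨fun i => (h i).1, fun s hs i hc => (h i).2 (hc ▸ hs)⟩
  have hfE1t : (Fintype.piFinset A).filter (· ∈ (⋂ s ∈ S, U s) ∩ U t)
      = Fintype.piFinset (fun i => A i \ insert t S) := by
    ext f
    simp only [Finset.mem_filter, Fintype.mem_piFinset, Set.mem_inter_iff, Set.mem_iInter,
      hU, Set.mem_setOf_eq, Finset.mem_sdiff, Finset.mem_insert]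
    constructor
    · rintro ⟨h1, h2, h3⟩ i
      refine ⟨h1 i, ?_⟩
      rintro (hc | hc)
      · exact h3 i hc
      · exact h2 _ hc i rfl
    · intro h
      refine ⟨fun i => (h i).1, fun s hs i hc => (h i).2 (Or.inr (hc ▸ hs)), fun i hc =>
        (h i).2 (Or.inl hc)⟩
  -- membership in E2
  have hE2mem : ∀ f : (i : Fin m) → α, f ∈ ⋂ s ∈ S, (U s)ᶜ ↔ ∀ s ∈ S, ∃ i, f i = s := by
    intro f
    simp only [Set.mem_iInter, Set.mem_compl_iff, hU, Set.mem_setOf_eq]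
    constructor
    · intro h s hs
      by_contra hc
      push_neg at hc
      exact h s hs hc
    · intro h s hs hc
      obtain ⟨i, hi⟩ := h s hs
      exact hc i hi
  have hfE2 : (Fintype.piFinset A).filter (· ∈ ⋂ s ∈ S, (U s)ᶜ)
      = (Fintype.piFinset A).filter (fun f => ∀ s ∈ S, ∃ i, f i = s) := by
    ext f
    simp only [Finset.mem_filter, hE2mem]
  have hfE2t : (Fintype.piFinset A).filter (· ∈ (⋂ s ∈ S, (U s)ᶜ) ∩ U t)
      = (Fintype.piFinset (fun i => (A i).erase t)).filter
          (fun f => ∀ s ∈ S, ∃ i, f i = s) := by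
    ext f
    simp only [Finset.mem_filter, Set.mem_inter_iff, hE2mem]
    simp only [Fintype.mem_piFinset, hU, Set.mem_setOf_eq, Finset.mem_erase]
    constructor
    · rintro ⟨h1, h2, h3⟩
      exact ⟨fun i => ⟨h3 i, h1 i⟩, h2⟩
    · rintro ⟨h1, h2⟩
      exact ⟨fun i => (h1 i).2, h2, fun i => (h1 i).1⟩
  -- measure values
  have hμUt : μ (U t) = (∏ i, (((A i).erase t).card : ℝ≥0∞)) * ∏ i, ((A i).card : ℝ≥0∞)⁻¹ := by
    rw [hμ, measure_eq A hA (U t)]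
    congr 1
    rw [hfUt, Fintype.card_piFinset]
    push_cast
    rfl
  -- the per-coordinate counting inequality for the first claim
  have key1 : ∀ i : Fin m, (A i \ insert t S).card * (A i).card
      ≤ ((A i).erase t).card * (A i \ S).card := by
    intro i
    have h0 : A i \ insert t S = (A i \ S).erase t := by
      ext x
      simp only [Finset.mem_sdiff, Finset.mem_erase, Finset.mem_insert, not_or]
      tauto
    by_cases htA : t ∈ A i
    · have htAS : t ∈ A i \ S := Finset.mem_sdiff.2 ⟨htA, ht⟩
      rw [h0, Finset.card_erase_of_mem htAS, Finset.card_erase_of_mem htA]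
      have h2 : (A i \ S).card ≤ (A i).card := Finset.card_le_card Finset.sdiff_subset
      rw [Nat.sub_one_mul, Nat.sub_one_mul, mul_comm]
      exact Nat.sub_le_sub_left h2 _
    · rw [h0, Finset.erase_eq_of_notMem htA,
        Finset.erase_eq_of_notMem (fun h => htA (Finset.mem_sdiff.1 h).1)]
      exact (Nat.mul_comm _ _).le
  constructor
  · -- first inequality
    have hcore : μ ((⋂ s ∈ S, U s) ∩ U t) ≤ μ (U t) * μ (⋂ s ∈ S, U s) := by
      rw [hμUt, hμ, measure_eq A hA ((⋂ s ∈ S, U s) ∩ U t), measure_eq A hA (⋂ s ∈ S, U s),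
        hfE1t, hfE1, Fintype.card_piFinset, Fintype.card_piFinset]
      push_cast
      rw [← Finset.prod_mul_distrib, ← Finset.prod_mul_distrib, ← Finset.prod_mul_distrib,
        ← Finset.prod_mul_distrib]
      refine Finset.prod_le_prod' fun i _ => ?_
      have hd : ((A i \ insert t S).card * (A i).card : ℝ≥0∞)
          ≤ (((A i).erase t).card * (A i \ S).card : ℝ≥0∞) := by
        exact_mod_cast key1 i
      calc ((A i \ insert t S).card : ℝ≥0∞) * ((A i).card : ℝ≥0∞)⁻¹
          = ((A i \ insert t S).card : ℝ≥0∞) * ((A i).card : ℝ≥0∞)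
            * (((A i).card : ℝ≥0∞)⁻¹ * ((A i).card : ℝ≥0∞)⁻¹) := by
            rw [mul_mul_mul_comm, hmul1 i, mul_one]
        _ ≤ (((A i).erase t).card : ℝ≥0∞) * ((A i \ S).card : ℝ≥0∞)
            * (((A i).card : ℝ≥0∞)⁻¹ * ((A i).card : ℝ≥0∞)⁻¹) := by
            exact mul_le_mul_left (by push_cast at hd ⊢; exact hd) _
        _ = (((A i).erase t).card : ℝ≥0∞) * ((A i).card : ℝ≥0∞)⁻¹
            * (((A i \ S).card : ℝ≥0∞) * ((A i).card : ℝ≥0∞)⁻¹) := mul_mul_mul_comm _ _ _ _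
    rw [cond_apply hE1m]
    rcases eq_or_ne (μ (⋂ s ∈ S, U s)) 0 with h0 | h0
    · have hz : μ ((⋂ s ∈ S, U s) ∩ U t) = 0 := measure_mono_null Set.inter_subset_left h0
      rw [hz, mul_zero]
      exact zero_le
    · have hfin : μ (⋂ s ∈ S, U s) ≠ ∞ := measure_ne_top μ _
      calc (μ (⋂ s ∈ S, U s))⁻¹ * μ ((⋂ s ∈ S, U s) ∩ U t)
          ≤ (μ (⋂ s ∈ S, U s))⁻¹ * (μ (U t) * μ (⋂ s ∈ S, U s)) := mul_le_mul_right hcore _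
        _ = μ (U t) * ((μ (⋂ s ∈ S, U s))⁻¹ * μ (⋂ s ∈ S, U s)) := by ring
        _ = μ (U t) := by rw [ENNReal.inv_mul_cancel h0 hfin, mul_one]
  · -- second inequality
    have hcore : μ (U t) * μ (⋂ s ∈ S, (U s)ᶜ) ≤ μ ((⋂ s ∈ S, (U s)ᶜ) ∩ U t) := by
      rw [hμUt, hμ, measure_eq A hA ((⋂ s ∈ S, (U s)ᶜ) ∩ U t),
        measure_eq A hA (⋂ s ∈ S, (U s)ᶜ), hfE2t, hfE2]
      have hone : (∏ i, ((A i).card : ℝ≥0∞)) * ∏ i, ((A i).card : ℝ≥0∞)⁻¹ = 1 := by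
        rw [← Finset.prod_mul_distrib]
        exact Finset.prod_eq_one fun i _ => hmul1 i
      have hcast : (((Fintype.piFinset A).filter (fun f => ∀ s ∈ S, ∃ i, f i = s)).card : ℝ≥0∞)
            * ∏ i, (((A i).erase t).card : ℝ≥0∞)
          ≤ (((Fintype.piFinset (fun i => (A i).erase t)).filter
              (fun f => ∀ s ∈ S, ∃ i, f i = s)).card : ℝ≥0∞) * ∏ i, ((A i).card : ℝ≥0∞) := by
        have := count_key A S t ht
        push_cast
        exact_mod_cast this
      calc (∏ i, (((A i).erase t).card : ℝ≥0∞)) * (∏ i, ((A i).card : ℝ≥0∞)⁻¹)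
            * ((((Fintype.piFinset A).filter (fun f => ∀ s ∈ S, ∃ i, f i = s)).card : ℝ≥0∞)
              * ∏ i, ((A i).card : ℝ≥0∞)⁻¹)
          = ((((Fintype.piFinset A).filter (fun f => ∀ s ∈ S, ∃ i, f i = s)).card : ℝ≥0∞)
              * ∏ i, (((A i).erase t).card : ℝ≥0∞))
            * ((∏ i, ((A i).card : ℝ≥0∞)⁻¹) * ∏ i, ((A i).card : ℝ≥0∞)⁻¹) := by ring
        _ ≤ ((((Fintype.piFinset (fun i => (A i).erase t)).filter
              (fun f => ∀ s ∈ S, ∃ i, f i = s)).card : ℝ≥0∞) * ∏ i, ((A i).card : ℝ≥0∞))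
            * ((∏ i, ((A i).card : ℝ≥0∞)⁻¹) * ∏ i, ((A i).card : ℝ≥0∞)⁻¹) :=
            mul_le_mul_left hcast _
        _ = (((Fintype.piFinset (fun i => (A i).erase t)).filter
              (fun f => ∀ s ∈ S, ∃ i, f i = s)).card : ℝ≥0∞) * (∏ i, ((A i).card : ℝ≥0∞)⁻¹)
            * ((∏ i, ((A i).card : ℝ≥0∞)) * ∏ i, ((A i).card : ℝ≥0∞)⁻¹) := by ring
        _ = (((Fintype.piFinset (fun i => (A i).erase t)).filter
              (fun f => ∀ s ∈ S, ∃ i, f i = s)).card : ℝ≥0∞)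
            * ∏ i, ((A i).card : ℝ≥0∞)⁻¹ := by rw [hone, mul_one]
    rw [cond_apply hE2m]
    rcases eq_or_ne (μ (⋂ s ∈ S, (U s)ᶜ)) 0 with h0 | h0
    · have hz : μ ((⋂ s ∈ S, (U s)ᶜ) ∩ (U t)ᶜ) = 0 :=
        measure_mono_null Set.inter_subset_left h0
      rw [hz, mul_zero]
      exact zero_le
    · have hfin : μ (⋂ s ∈ S, (U s)ᶜ) ≠ ∞ := measure_ne_top μ _
      have hsplit : μ ((⋂ s ∈ S, (U s)ᶜ) ∩ U t) + μ ((⋂ s ∈ S, (U s)ᶜ) ∩ (U t)ᶜ)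
          = μ (⋂ s ∈ S, (U s)ᶜ) := by
        rw [show (⋂ s ∈ S, (U s)ᶜ) ∩ (U t)ᶜ = (⋂ s ∈ S, (U s)ᶜ) \ U t from Set.diff_eq _ _ ▸ rfl]
        exact measure_inter_add_diff _ (hUm t)
      have hUtc : μ (U t)ᶜ = 1 - μ (U t) := prob_compl_eq_one_sub (hUm t)
      rw [hUtc]
      have hxt : μ ((⋂ s ∈ S, (U s)ᶜ) ∩ U t) ≠ ∞ := measure_ne_top μ _
      have hy : μ ((⋂ s ∈ S, (U s)ᶜ) ∩ (U t)ᶜ) ≤ (1 - μ (U t)) * μ (⋂ s ∈ S, (U s)ᶜ) := by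
        have h1 : (1 - μ (U t)) * μ (⋂ s ∈ S, (U s)ᶜ)
            = μ (⋂ s ∈ S, (U s)ᶜ) - μ (U t) * μ (⋂ s ∈ S, (U s)ᶜ) := by
          rw [ENNReal.sub_mul (fun _ _ => hfin), one_mul]
        have h2 : μ ((⋂ s ∈ S, (U s)ᶜ) ∩ (U t)ᶜ)
            = μ (⋂ s ∈ S, (U s)ᶜ) - μ ((⋂ s ∈ S, (U s)ᶜ) ∩ U t) := by
          rw [← hsplit, ENNReal.add_sub_cancel_left hxt]
        rw [h1, h2]
        exact tsub_le_tsub_left hcore _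
      calc (μ (⋂ s ∈ S, (U s)ᶜ))⁻¹ * μ ((⋂ s ∈ S, (U s)ᶜ) ∩ (U t)ᶜ)
          ≤ (μ (⋂ s ∈ S, (U s)ᶜ))⁻¹ * ((1 - μ (U t)) * μ (⋂ s ∈ S, (U s)ᶜ)) :=
            mul_le_mul_right hy _
        _ = (1 - μ (U t)) * ((μ (⋂ s ∈ S, (U s)ᶜ))⁻¹ * μ (⋂ s ∈ S, (U s)ᶜ)) := by ring
        _ = 1 - μ (U t) := by rw [ENNReal.inv_mul_cancel h0 hfin, mul_one]
end

section
/- For integers 2 ≤ b₀ < b₁ and γ ≥ 1, the product d = ∏_{i=b₀}^{b₁-1} (1 - 1/(γi)) satisfies ((b₀-1)/(b₁-1))^{1/γ} ≤ d ≤ (b₀/b₁)^{1/γ}. -/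
open Finset Real

-- telescoping lemmas
lemma tele1 (b₀ b₁ : ℕ) (hb₀ : 2 ≤ b₀) (hb : b₀ ≤ b₁) :
    ∏ i ∈ Finset.Ico b₀ b₁, (((i:ℝ)-1)/i) = ((b₀:ℝ)-1)/((b₁:ℝ)-1) := by
  induction b₁, hb using Nat.le_induction with
  | base =>
    have : ((b₀:ℝ)-1) ≠ 0 := by
      have : (2:ℝ) ≤ (b₀:ℝ) := by exact_mod_cast hb₀
      linarith
    simp [div_self this]
  | succ n hn ih =>
    rw [Finset.prod_Ico_succ_top hn, ih]
    have hn2 : (2:ℕ) ≤ n := le_trans hb₀ hn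
    have h1 : ((n:ℝ)-1) ≠ 0 := by
      have : (2:ℝ) ≤ (n:ℝ) := by exact_mod_cast hn2
      linarith
    have h2 : (n:ℝ) ≠ 0 := by positivity
    push_cast
    field_simp
    rw [add_sub_cancel_right, mul_div_cancel_right₀ _ h2]

lemma tele2 (b₀ b₁ : ℕ) (hb₀ : 2 ≤ b₀) (hb : b₀ ≤ b₁) :
    ∏ i ∈ Finset.Ico b₀ b₁, ((i:ℝ)/(i+1)) = (b₀:ℝ)/(b₁:ℝ) := by
  induction b₁, hb using Nat.le_induction with
  | base =>
    have : (b₀:ℝ) ≠ 0 := by positivity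
    simp [div_self this]
  | succ n hn ih =>
    rw [Finset.prod_Ico_succ_top hn, ih]
    have hn2 : (2:ℕ) ≤ n := le_trans hb₀ hn
    have h2 : (n:ℝ) ≠ 0 := by positivity
    have h3 : (n:ℝ)+1 ≠ 0 := by positivity
    push_cast
    field_simp

lemma factor_nonneg (γ i : ℕ) (hγ : 1 ≤ γ) (hi : 2 ≤ i) :
    (0:ℝ) ≤ 1 - 1/((γ:ℝ)*i) := by
  have hi' : (2:ℝ) ≤ (i:ℝ) := by exact_mod_cast hi
  have hγ' : (1:ℝ) ≤ (γ:ℝ) := by exact_mod_cast hγ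
  have h2 : (2:ℝ) ≤ (γ:ℝ)*i := by nlinarith
  have : 1/((γ:ℝ)*i) ≤ 1/2 := by
    apply one_div_le_one_div_of_le <;> linarith
  linarith

lemma lower_pt (γ i : ℕ) (hγ : 1 ≤ γ) (hi : 2 ≤ i) :
    (((i:ℝ)-1)/i) ^ ((γ:ℝ)⁻¹) ≤ 1 - 1/((γ:ℝ)*i) := by
  have hi' : (2:ℝ) ≤ (i:ℝ) := by exact_mod_cast hi
  have hγ' : (1:ℝ) ≤ (γ:ℝ) := by exact_mod_cast hγ
  have hγ0 : (γ:ℝ) ≠ 0 := by linarith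
  have hi0 : (i:ℝ) ≠ 0 := by linarith
  set y : ℝ := 1 - 1/((γ:ℝ)*i) with hy
  have hy0 : 0 ≤ y := factor_nonneg γ i hγ hi
  have key : ((i:ℝ)-1)/i ≤ y ^ γ := by
    have hb : (-2:ℝ) ≤ -(1/((γ:ℝ)*i)) := by
      have : 1/((γ:ℝ)*i) ≤ 1/2 := by
        apply one_div_le_one_div_of_le; linarith; nlinarith
      linarith
    have := one_add_mul_le_pow hb γ
    have heq : (1:ℝ) + (γ:ℝ) * (-(1/((γ:ℝ)*i))) = ((i:ℝ)-1)/i := by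
      field_simp; ring
    have heq2 : (1:ℝ) + -(1/((γ:ℝ)*i)) = y := by rw [hy]; ring
    rw [heq, heq2] at this
    exact this
  calc (((i:ℝ)-1)/i) ^ ((γ:ℝ)⁻¹) ≤ (y ^ γ) ^ ((γ:ℝ)⁻¹) := by
        apply Real.rpow_le_rpow (div_nonneg (by linarith) (by linarith)) key (by positivity)
    _ = y := by
        rw [← Real.rpow_natCast y γ, ← Real.rpow_mul hy0,
          mul_inv_cancel₀ hγ0, Real.rpow_one]

lemma upper_pt (γ i : ℕ) (hγ : 1 ≤ γ) (hi : 2 ≤ i) :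
    1 - 1/((γ:ℝ)*i) ≤ ((i:ℝ)/(i+1)) ^ ((γ:ℝ)⁻¹) := by
  have hi' : (2:ℝ) ≤ (i:ℝ) := by exact_mod_cast hi
  have hγ' : (1:ℝ) ≤ (γ:ℝ) := by exact_mod_cast hγ
  have hγ0 : (γ:ℝ) ≠ 0 := by linarith
  have hi0 : (i:ℝ) ≠ 0 := by linarith
  set y : ℝ := 1 - 1/((γ:ℝ)*i) with hy
  have hy0 : 0 ≤ y := factor_nonneg γ i hγ hi
  have key : y ^ γ ≤ (i:ℝ)/(i+1) := by
    have h1 : y ≤ Real.exp (-(1/((γ:ℝ)*i))) := by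
      have := Real.add_one_le_exp (-(1/((γ:ℝ)*i)))
      linarith
    have h2 : y ^ γ ≤ Real.exp (-(1/((γ:ℝ)*i))) ^ γ :=
      pow_le_pow_left₀ hy0 h1 γ
    have h3 : Real.exp (-(1/((γ:ℝ)*i))) ^ γ = Real.exp (-(1/(i:ℝ))) := by
      rw [← Real.exp_nat_mul]
      congr 1
      field_simp
    have h4 : Real.exp (-(1/(i:ℝ))) ≤ (i:ℝ)/(i+1) := by
      have h6 : ((i:ℝ)+1)/i ≤ Real.exp (1/(i:ℝ)) := by
        have h5 := Real.add_one_le_exp (1/(i:ℝ))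
        have : ((i:ℝ)+1)/i = 1/(i:ℝ) + 1 := by field_simp; ring
        linarith [this ▸ h5]
      calc Real.exp (-(1/(i:ℝ))) = (Real.exp (1/(i:ℝ)))⁻¹ := Real.exp_neg _
        _ ≤ (((i:ℝ)+1)/i)⁻¹ := by
            apply inv_anti₀ (by positivity) h6
        _ = (i:ℝ)/(i+1) := by rw [inv_div]
    calc y ^ γ ≤ _ := h2
      _ = _ := h3
      _ ≤ _ := h4
  calc y = (y ^ γ) ^ ((γ:ℝ)⁻¹) := by
        rw [← Real.rpow_natCast y γ, ← Real.rpow_mul hy0,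
          mul_inv_cancel₀ hγ0, Real.rpow_one]
    _ ≤ ((i:ℝ)/(i+1)) ^ ((γ:ℝ)⁻¹) := by
        apply Real.rpow_le_rpow (by positivity) key (by positivity)

/-- For integers `2 ≤ b₀ < b₁` and `γ ≥ 1`, the product `d = ∏_{i=b₀}^{b₁-1} (1 - 1/(γ i))`
satisfies `((b₀-1)/(b₁-1))^(1/γ) ≤ d ≤ (b₀/b₁)^(1/γ)`. -/
theorem stmt17 (b₀ b₁ γ : ℕ) (hb₀ : 2 ≤ b₀) (hb : b₀ < b₁) (hγ : 1 ≤ γ) :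
    ((b₀ - 1 : ℝ) / (b₁ - 1)) ^ ((γ : ℝ)⁻¹) ≤
        (∏ i ∈ Finset.Ico b₀ b₁, (1 - 1 / ((γ : ℝ) * i))) ∧
      (∏ i ∈ Finset.Ico b₀ b₁, (1 - 1 / ((γ : ℝ) * i))) ≤ ((b₀ : ℝ) / b₁) ^ ((γ : ℝ)⁻¹) := by
  have hmem : ∀ i ∈ Finset.Ico b₀ b₁, 2 ≤ i := fun i hi =>
    le_trans hb₀ (Finset.mem_Ico.mp hi).1
  constructor
  · calc ((b₀ - 1 : ℝ) / (b₁ - 1)) ^ ((γ : ℝ)⁻¹)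
        = (∏ i ∈ Finset.Ico b₀ b₁, (((i:ℝ)-1)/i)) ^ ((γ : ℝ)⁻¹) := by
          rw [tele1 b₀ b₁ hb₀ hb.le]
      _ = ∏ i ∈ Finset.Ico b₀ b₁, ((((i:ℝ)-1)/i) ^ ((γ : ℝ)⁻¹)) := by
          rw [← Real.finset_prod_rpow _ _ (fun i hi => by
            have h2 : (2:ℝ) ≤ (i:ℝ) := by exact_mod_cast hmem i hi
            apply div_nonneg <;> linarith)]
      _ ≤ ∏ i ∈ Finset.Ico b₀ b₁, (1 - 1 / ((γ : ℝ) * i)) := by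
          apply Finset.prod_le_prod
          · intro i hi
            have h2 : (2:ℝ) ≤ (i:ℝ) := by exact_mod_cast hmem i hi
            exact Real.rpow_nonneg (div_nonneg (by linarith) (by linarith)) _
          · intro i hi; exact lower_pt γ i hγ (hmem i hi)
  · calc (∏ i ∈ Finset.Ico b₀ b₁, (1 - 1 / ((γ : ℝ) * i)))
        ≤ ∏ i ∈ Finset.Ico b₀ b₁, (((i:ℝ)/(i+1)) ^ ((γ : ℝ)⁻¹)) := by
          apply Finset.prod_le_prod
          · intro i hi; exact factor_nonneg γ i hγ (hmem i hi)
          · intro i hi; exact upper_pt γ i hγ (hmem i hi)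
      _ = (∏ i ∈ Finset.Ico b₀ b₁, ((i:ℝ)/(i+1))) ^ ((γ : ℝ)⁻¹) := by
          rw [← Real.finset_prod_rpow _ _ (fun i hi => by positivity)]
      _ = ((b₀ : ℝ) / b₁) ^ ((γ : ℝ)⁻¹) := by rw [tele2 b₀ b₁ hb₀ hb.le]
end
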